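/- Let g : 𝒳 → 𝒴 be surjective, Y_k = g(X_k), and let Q be the transition matrix of the best Markov approximation Ỹ of Y (Q_{y→y'} = P(Y_2 = y' | Y_1 = y)). Set ε := sqrt( ln(2) · C_L(X,g) / ( 2 · min_{x∈𝒳} μ_x ) ). Then for every x ∈ 𝒳 and every subset B ⊆ 𝒴: Σ_{x'∈g^{−1}(B)} P_{x→x'} ≥ Σ_{y∈B} Q_{g(x)→y} − ε. (Consequently, the relation {(g(x), x) : x ∈ 𝒳} witnesses that X and Ỹ are ε-bisimilar: for every pair (g(x), x) in the relation and every set T of states, the probability under P that x transitions into the relation-image of T is at least the probability under Q that g(x) transitions into T, minus ε.) -/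

import Mathlib

open Filter Real

/-- Shannon entropy (base 2) of a finitely supported probability mass function. -/
noncomputable def ent {A : Type} [Fintype A] (q : A → ℝ) : ℝ :=
  - ∑ a, q a * Real.logb 2 (q a)

/-- Joint law of the first `n+1` samples of a Markov chain with initial distribution `μ`
and transition matrix `P`. -/
noncomputable def chainJoint {X : Type} (μ : X → ℝ) (P : X → X → ℝ) (n : ℕ)
    (x : Fin (n + 1) → X) : ℝ :=
  μ (x 0) * ∏ i : Fin n, P (x i.castSucc) (x i.succ)

/-- Joint law of `(Y_1, …, Y_{n+1})`, where `Y` is the stationary process obtained by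
observing the stationary Markov chain `X ~ (μ, P)` through the channel `W`. -/
noncomputable def obsJoint {X Y : Type} [Fintype X] (μ : X → ℝ) (P : X → X → ℝ)
    (W : X → Y → ℝ) (n : ℕ) (y : Fin (n + 1) → Y) : ℝ :=
  ∑ x : Fin (n + 1) → X, chainJoint μ P n x * ∏ i, W (x i) (y i)

/-- A finite stochastic matrix is irreducible and aperiodic iff it is primitive, i.e., some
power (and hence all larger powers) of it is entrywise positive. -/
def IrreducibleAperiodic {X : Type} [Fintype X] [DecidableEq X] (P : Matrix X X ℝ) : Prop :=
  ∃ N : ℕ, ∀ n ≥ N, ∀ x x' : X, 0 < (P ^ n) x x'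

section Defs

variable {X Y : Type} [Fintype X] [Fintype Y]

/-- Marginal distribution `ν` of each `Y_k`: `νᵀ = μᵀ W`. -/
noncomputable def nuDist (μ : X → ℝ) (W : X → Y → ℝ) : Y → ℝ := fun y => ∑ x, μ x * W x y

/-- Joint distribution of `(Y_1, Y_2)`. -/
noncomputable def jointYY (μ : X → ℝ) (P : X → X → ℝ) (W : X → Y → ℝ) : Y × Y → ℝ :=
  fun p => ∑ x, ∑ x', μ x * W x p.1 * P x x' * W x' p.2

/-- Joint distribution of `(X_1, Y_2)`. -/
noncomputable def jointX1Y2 (μ : X → ℝ) (P : X → X → ℝ) (W : X → Y → ℝ) : X × Y → ℝ :=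
  fun p => ∑ x', μ p.1 * P p.1 x' * W x' p.2

/-- Joint distribution of `(X_2, Y_1)`. -/
noncomputable def jointX2Y1 (μ : X → ℝ) (P : X → X → ℝ) (W : X → Y → ℝ) : X × Y → ℝ :=
  fun p => ∑ x, μ x * W x p.2 * P x p.1

/-- Joint distribution of `(X_1, X_2)`. -/
noncomputable def jointXX (μ : X → ℝ) (P : X → X → ℝ) : X × X → ℝ :=
  fun p => μ p.1 * P p.1 p.2

/-- Joint distribution of `(X_1, Y_1)`. -/
noncomputable def jointX1Y1 (μ : X → ℝ) (W : X → Y → ℝ) : X × Y → ℝ :=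
  fun p => μ p.1 * W p.1 p.2

/-- Joint distribution of `(X_2, Y_2)`. -/
noncomputable def jointX2Y2 (μ : X → ℝ) (P : X → X → ℝ) (W : X → Y → ℝ) : X × Y → ℝ :=
  fun p => ∑ x, μ x * P x p.1 * W p.1 p.2

/-- Joint distribution of `(X_1, X_2, Y_2)`. -/
noncomputable def jointX1X2Y2 (μ : X → ℝ) (P : X → X → ℝ) (W : X → Y → ℝ) :
    X × X × Y → ℝ :=
  fun p => μ p.1 * P p.1 p.2.1 * W p.2.1 p.2.2

/-- Joint distribution of `(X_1, X_2, Y_1)`. -/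
noncomputable def jointX1X2Y1 (μ : X → ℝ) (P : X → X → ℝ) (W : X → Y → ℝ) :
    X × X × Y → ℝ :=
  fun p => μ p.1 * W p.1 p.2.2 * P p.1 p.2.1

/-- Joint distribution of `(X_1, Y_1, Y_2)`. -/
noncomputable def jointX1Y1Y2 (μ : X → ℝ) (P : X → X → ℝ) (W : X → Y → ℝ) :
    X × Y × Y → ℝ :=
  fun p => ∑ x', μ p.1 * W p.1 p.2.1 * P p.1 x' * W x' p.2.2

/-- Conditional entropy `H(Y_2 | Y_1) = H(Y_1, Y_2) − H(Y_1)`. -/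
noncomputable def HY2gY1 (μ : X → ℝ) (P : X → X → ℝ) (W : X → Y → ℝ) : ℝ :=
  ent (jointYY μ P W) - ent (nuDist μ W)

/-- Conditional entropy `H(Y_2 | X_1) = H(X_1, Y_2) − H(X_1)`. -/
noncomputable def HY2gX1 (μ : X → ℝ) (P : X → X → ℝ) (W : X → Y → ℝ) : ℝ :=
  ent (jointX1Y2 μ P W) - ent μ

/-- Conditional entropy `H(Y_1 | X_2) = H(X_2, Y_1) − H(X_2)`. -/
noncomputable def HY1gX2 (μ : X → ℝ) (P : X → X → ℝ) (W : X → Y → ℝ) : ℝ :=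
  ent (jointX2Y1 μ P W) - ent μ

/-- Mutual information `I(X_1; X_2) = H(X_1) + H(X_2) − H(X_1, X_2)` (stationary case). -/
noncomputable def IX1X2 (μ : X → ℝ) (P : X → X → ℝ) : ℝ :=
  2 * ent μ - ent (jointXX μ P)

/-- Mutual information `I(Y_1; Y_2) = H(Y_1) + H(Y_2) − H(Y_1, Y_2)` (stationary case). -/
noncomputable def IY1Y2 (μ : X → ℝ) (P : X → X → ℝ) (W : X → Y → ℝ) : ℝ :=
  2 * ent (nuDist μ W) - ent (jointYY μ P W)

/-- The lumpability cost `C_L(X, W) = H(Y_2|Y_1) − H(Y_2|X_1)`. -/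
noncomputable def CL (μ : X → ℝ) (P : X → X → ℝ) (W : X → Y → ℝ) : ℝ :=
  HY2gY1 μ P W - HY2gX1 μ P W

/-- The predictability cost `C_P(X, W) = I(X_1;X_2) − I(Y_1;Y_2)`. -/
noncomputable def CP (μ : X → ℝ) (P : X → X → ℝ) (W : X → Y → ℝ) : ℝ :=
  IX1X2 μ P - IY1Y2 μ P W

/-- The aggregation cost `C_β(X, W) = (1−2β)·C_L(X,W) + β·C_P(X,W)`. -/
noncomputable def Cbeta (μ : X → ℝ) (P : X → X → ℝ) (W : X → Y → ℝ) (β : ℝ) : ℝ :=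
  (1 - 2 * β) * CL μ P W + β * CP μ P W

/-- `δ_β(X,W) = (1−β)·(H(Y_2|Y_1) − H̄(Y)) + β·(I(X_1;X_2) − H(Y_1) + H̄(Y))`, where `hbarY`
denotes the entropy rate `H̄(Y)`. -/
noncomputable def deltaBeta (μ : X → ℝ) (P : X → X → ℝ) (W : X → Y → ℝ)
    (hbarY β : ℝ) : ℝ :=
  (1 - β) * (HY2gY1 μ P W - hbarY) + β * (IX1X2 μ P - ent (nuDist μ W) + hbarY)

/-- Conditional mutual information
`I(X_1; X_2 | Y_2) = H(X_1,Y_2) + H(X_2,Y_2) − H(X_1,X_2,Y_2) − H(Y_2)`. -/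
noncomputable def IX1X2gY2 (μ : X → ℝ) (P : X → X → ℝ) (W : X → Y → ℝ) : ℝ :=
  ent (jointX1Y2 μ P W) + ent (jointX2Y2 μ P W) - ent (jointX1X2Y2 μ P W) -
    ent (nuDist μ W)

/-- Conditional mutual information
`I(X_2; X_1 | Y_1) = H(X_1,Y_1) + H(X_2,Y_1) − H(X_1,X_2,Y_1) − H(Y_1)`. -/
noncomputable def IX2X1gY1 (μ : X → ℝ) (P : X → X → ℝ) (W : X → Y → ℝ) : ℝ :=
  ent (jointX1Y1 μ W) + ent (jointX2Y1 μ P W) - ent (jointX1X2Y1 μ P W) -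
    ent (nuDist μ W)

/-- Conditional mutual information
`I(Y_2; X_1 | Y_1) = H(X_1,Y_1) + H(Y_1,Y_2) − H(X_1,Y_1,Y_2) − H(Y_1)`. -/
noncomputable def IY2X1gY1 (μ : X → ℝ) (P : X → X → ℝ) (W : X → Y → ℝ) : ℝ :=
  ent (jointX1Y1 μ W) + ent (jointYY μ P W) - ent (jointX1Y1Y2 μ P W) -
    ent (nuDist μ W)

/-- Mutual information `I(X_2; Y_1) = H(X_2) + H(Y_1) − H(X_2, Y_1)`. -/
noncomputable def IX2Y1 (μ : X → ℝ) (P : X → X → ℝ) (W : X → Y → ℝ) : ℝ :=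
  ent μ + ent (nuDist μ W) - ent (jointX2Y1 μ P W)

/-- The deterministic channel induced by an aggregation function `g : X → Y`:
`W_{x→y} = 1` iff `y = g x`. -/
noncomputable def detW [DecidableEq Y] (g : X → Y) : X → Y → ℝ :=
  fun x y => if g x = y then 1 else 0

/-- The row-stochastic matrix `R = P·W` for a deterministic aggregation `g`:
`R_{x→y} = ∑_{x' : g x' = y} P_{x→x'}`. -/
noncomputable def Rmat [DecidableEq Y] (P : X → X → ℝ) (g : X → Y) : X → Y → ℝ :=
  fun x y => ∑ x', if g x' = y then P x x' else 0

/-- Kullback–Leibler divergence (base 2) between two probability mass functions on `Y`. -/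
noncomputable def klDiv2 (p q : Y → ℝ) : ℝ :=
  ∑ y, p y * Real.logb 2 (p y / q y)

end Defs

namespace EpsBisim
noncomputable def gfun (t : ℝ) : ℝ := t * Real.log t - t + 1 - 3*(t-1)^2/(2*(t+2))
noncomputable def gfun' (t : ℝ) : ℝ := Real.log t - 3*(t-1)*(t+5)/(2*(t+2)^2)

lemma hasDerivAt_gfun {t : ℝ} (ht : 0 < t) : HasDerivAt gfun (gfun' t) t := by
  have ht2 : (0:ℝ) < t + 2 := by linarith
  have h2 : (2*(t+2)) ≠ 0 := by positivity
  have h1 : HasDerivAt (fun t : ℝ => t * Real.log t) (Real.log t + 1) t := by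
    have := (hasDerivAt_id t).fun_mul (Real.hasDerivAt_log ht.ne')
    simpa [mul_inv_cancel₀ ht.ne'] using this
  have hnum : HasDerivAt (fun t : ℝ => 3*(t-1)^2) (3*(2*(t-1))) t := by
    have := ((hasDerivAt_id t).sub_const 1).pow 2
    simpa using (this.const_mul 3)
  have hden : HasDerivAt (fun t : ℝ => 2*(t+2)) 2 t := by
    simpa using ((hasDerivAt_id t).add_const 2).const_mul 2
  have hq := hnum.div hden h2
  have h := ((h1.sub (hasDerivAt_id t)).add_const 1).sub hq
  refine h.congr_deriv ?_
  unfold gfun'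
  field_simp
  ring

lemma hasDerivAt_gfun' {t : ℝ} (ht : 0 < t) :
    HasDerivAt gfun' (1/t - 27/(t+2)^3) t := by
  have ht2 : (0:ℝ) < t + 2 := by linarith
  have h2 : (2*(t+2)^2) ≠ 0 := by positivity
  have hnum : HasDerivAt (fun t : ℝ => 3*(t-1)*(t+5)) (3*(t+5) + 3*(t-1)) t := by
    have := (((hasDerivAt_id t).sub_const 1).const_mul 3).fun_mul ((hasDerivAt_id t).add_const 5)
    simpa using this
  have hden : HasDerivAt (fun t : ℝ => 2*(t+2)^2) (2*(2*(t+2))) t := by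
    have := (((hasDerivAt_id t).add_const 2).pow 2).const_mul 2
    simpa using this
  have hq := hnum.div hden h2
  have h := (Real.hasDerivAt_log ht.ne').sub hq
  refine h.congr_deriv ?_
  field_simp
  ring

lemma gfun_nonneg {t : ℝ} (ht : 0 < t) : 0 ≤ gfun t := by
  have hmono' : MonotoneOn gfun' (Set.Ioi (0:ℝ)) := by
    apply monotoneOn_of_deriv_nonneg (convex_Ioi 0)
    · exact fun x hx => (hasDerivAt_gfun' hx).continuousAt.continuousWithinAt
    · intro x hx
      rw [interior_Ioi] at hx
      exact (hasDerivAt_gfun' hx).differentiableAt.differentiableWithinAt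
    · intro x hx
      rw [interior_Ioi] at hx
      rw [(hasDerivAt_gfun' hx).deriv]
      have hx0 : (0:ℝ) < x := hx
      have hx2 : (0:ℝ) < x + 2 := by linarith
      rw [sub_nonneg, div_le_div_iff₀ (by positivity) hx0]
      nlinarith [sq_nonneg (x-1), hx0.le, hx2]
  have hg'1 : gfun' 1 = 0 := by simp [gfun']
  have hg1 : gfun 1 = 0 := by norm_num [gfun]
  rcases le_total t 1 with h1 | h1
  · have hanti : AntitoneOn gfun (Set.Ioc (0:ℝ) 1) := by
      apply antitoneOn_of_deriv_nonpos (convex_Ioc 0 1)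
      · exact fun x hx => (hasDerivAt_gfun hx.1).continuousAt.continuousWithinAt
      · intro x hx
        rw [interior_Ioc] at hx
        exact (hasDerivAt_gfun hx.1).differentiableAt.differentiableWithinAt
      · intro x hx
        rw [interior_Ioc] at hx
        rw [(hasDerivAt_gfun hx.1).deriv]
        have := hmono' hx.1 (by norm_num : (1:ℝ) ∈ Set.Ioi (0:ℝ)) hx.2.le
        linarith [hg'1 ▸ this]
    have := hanti (Set.mem_Ioc.2 ⟨ht, h1⟩) (by norm_num) h1
    linarith [hg1 ▸ this]
  · have hmono : MonotoneOn gfun (Set.Ici (1:ℝ)) := by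
      apply monotoneOn_of_deriv_nonneg (convex_Ici 1)
      · exact fun x hx => (hasDerivAt_gfun (by simp at hx; linarith)).continuousAt.continuousWithinAt
      · intro x hx
        rw [interior_Ici] at hx
        exact (hasDerivAt_gfun (by simp at hx; linarith)).differentiableAt.differentiableWithinAt
      · intro x hx
        rw [interior_Ici] at hx
        have hx1 : (1:ℝ) < x := hx
        rw [(hasDerivAt_gfun (by linarith)).deriv]
        have := hmono' (by norm_num : (1:ℝ) ∈ Set.Ioi (0:ℝ)) (by simp; linarith) hx1.le
        linarith [hg'1 ▸ this]
    have := hmono (by norm_num) (Set.mem_Ici.2 h1) h1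
    linarith [hg1 ▸ this]

/-- core scalar inequality in nats -/
lemma core_ineq {t : ℝ} (ht : 0 ≤ t) :
    3*(t-1)^2/(2*(t+2)) ≤ t * Real.log t - t + 1 := by
  rcases eq_or_lt_of_le ht with h | h
  · rw [← h]; norm_num
  · have := gfun_nonneg h
    unfold gfun at this; linarith

/-- pointwise inequality -/
lemma pointwise_ineq {p q : ℝ} (hp : 0 ≤ p) (hq : 0 ≤ q) (hac : q = 0 → p = 0) :
    3*(p-q)^2/(2*(p+2*q)) ≤ p * Real.log (p/q) - p + q := by
  rcases eq_or_lt_of_le hq with h | h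
  · rw [hac h.symm, ← h]; norm_num
  · have ht : 0 ≤ p / q := div_nonneg hp h.le
    have key := core_ineq ht
    have hmul := mul_le_mul_of_nonneg_left key h.le
    have hpq : p + 2*q ≠ 0 := by positivity
    have e1 : q * (3*(p/q-1)^2/(2*(p/q+2))) = 3*(p-q)^2/(2*(p+2*q)) := by
      rw [div_add' _ _ _ h.ne', div_sub' h.ne']
      field_simp
    have e2 : q * (p/q * Real.log (p/q) - p/q + 1) = p * Real.log (p/q) - p + q := by
      field_simp
    rw [e1, e2] at hmul
    exact hmul

variable {Y : Type} [Fintype Y] [DecidableEq Y]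

lemma kl_nats (p q : Y → ℝ) :
    Real.log 2 * klDiv2 p q = ∑ y, p y * Real.log (p y / q y) := by
  have h2 : Real.log 2 ≠ 0 := (Real.log_pos one_lt_two).ne'
  rw [klDiv2, Finset.mul_sum]
  refine Finset.sum_congr rfl fun y _ => ?_
  rw [Real.logb]
  field_simp

lemma kl_key (p q : Y → ℝ) (hp0 : ∀ y, 0 ≤ p y) (hq0 : ∀ y, 0 ≤ q y)
    (hp1 : ∑ y, p y = 1) (hq1 : ∑ y, q y = 1) (hac : ∀ y, q y = 0 → p y = 0) :
    (∑ y, (p y - q y)^2 / (p y + 2*q y)) * 3 ≤ 2 * (Real.log 2 * klDiv2 p q) := by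
  rw [kl_nats]
  have key : ∀ y, 3*(p y - q y)^2/(2*(p y + 2*q y)) ≤
      p y * Real.log (p y / q y) - p y + q y :=
    fun y => pointwise_ineq (hp0 y) (hq0 y) (hac y)
  have hsum := Finset.sum_le_sum (fun y (_ : y ∈ Finset.univ) => key y)
  have e1 : ∑ y, (p y * Real.log (p y / q y) - p y + q y) =
      (∑ y, p y * Real.log (p y / q y)) - 1 + 1 := by
    rw [Finset.sum_add_distrib, Finset.sum_sub_distrib, hp1, hq1]
  have e2 : ∑ y, 3*(p y - q y)^2/(2*(p y + 2*q y)) =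
      (∑ y, (p y - q y)^2 / (p y + 2*q y)) * (3/2) := by
    rw [Finset.sum_mul]
    refine Finset.sum_congr rfl fun y _ => ?_
    rcases eq_or_ne (p y + 2*q y) 0 with h | h
    · rw [h]; simp
    · field_simp
  rw [e1, e2] at hsum
  linarith

lemma klDiv2_nonneg (p q : Y → ℝ) (hp0 : ∀ y, 0 ≤ p y) (hq0 : ∀ y, 0 ≤ q y)
    (hp1 : ∑ y, p y = 1) (hq1 : ∑ y, q y = 1) (hac : ∀ y, q y = 0 → p y = 0) :
    0 ≤ klDiv2 p q := by
  have h := kl_key p q hp0 hq0 hp1 hq1 hac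
  have hS : 0 ≤ ∑ y, (p y - q y)^2 / (p y + 2*q y) := by
    refine Finset.sum_nonneg fun y _ => div_nonneg (sq_nonneg _) (by nlinarith [hp0 y, hq0 y])
  have h2 : 0 < Real.log 2 := Real.log_pos one_lt_two
  nlinarith

lemma pinsker_sum (p q : Y → ℝ) (hp0 : ∀ y, 0 ≤ p y) (hq0 : ∀ y, 0 ≤ q y)
    (hp1 : ∑ y, p y = 1) (hq1 : ∑ y, q y = 1) (hac : ∀ y, q y = 0 → p y = 0)
    (B : Finset Y) :
    (∑ y ∈ B, q y) - (∑ y ∈ B, p y) ≤ Real.sqrt (Real.log 2 * klDiv2 p q / 2) := by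
  set T := ∑ y, |p y - q y| with hT
  have hs0 : ∀ y, 0 ≤ p y + 2*q y := fun y => by nlinarith [hp0 y, hq0 y]
  -- Cauchy-Schwarz
  have CS := Finset.sum_mul_sq_le_sq_mul_sq Finset.univ
    (fun y => |p y - q y| / Real.sqrt (p y + 2*q y)) (fun y => Real.sqrt (p y + 2*q y))
  have e1 : ∀ y : Y, |p y - q y| / Real.sqrt (p y + 2*q y) * Real.sqrt (p y + 2*q y)
      = |p y - q y| := by
    intro y
    rcases eq_or_ne (p y + 2*q y) 0 with h | h
    · have hp : p y = 0 := by nlinarith [hp0 y, hq0 y]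
      have hq : q y = 0 := by nlinarith [hp0 y, hq0 y]
      simp [hp, hq]
    · exact div_mul_cancel₀ _ (Real.sqrt_ne_zero'.2 (lt_of_le_of_ne (hs0 y) (Ne.symm h)))
  have e2 : ∀ y : Y, (|p y - q y| / Real.sqrt (p y + 2*q y))^2
      = (p y - q y)^2 / (p y + 2*q y) := by
    intro y
    rw [div_pow, sq_abs, Real.sq_sqrt (hs0 y)]
  have e3 : ∑ y, (Real.sqrt (p y + 2*q y))^2 = 3 := by
    have : ∀ y : Y, (Real.sqrt (p y + 2*q y))^2 = p y + 2*q y :=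
      fun y => Real.sq_sqrt (hs0 y)
    simp_rw [this]
    rw [Finset.sum_add_distrib, hp1, ← Finset.mul_sum, hq1]
    norm_num
  simp_rw [e1, e2] at CS
  rw [e3] at CS
  have key := kl_key p q hp0 hq0 hp1 hq1 hac
  have hT2 : T^2 ≤ 2 * (Real.log 2 * klDiv2 p q) := le_trans CS key
  -- B step
  have hC : (∑ y ∈ B, q y) - (∑ y ∈ B, p y) ≤ T/2 := by
    have hsplit : ∑ y ∈ B, |p y - q y| + ∑ y ∈ Bᶜ, |p y - q y| = T :=
      Finset.sum_add_sum_compl B _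
    have hsplit2 : ∑ y ∈ B, (q y - p y) + ∑ y ∈ Bᶜ, (q y - p y) = 0 := by
      rw [Finset.sum_add_sum_compl B, Finset.sum_sub_distrib, hp1, hq1, sub_self]
    have h1 : ∑ y ∈ B, (q y - p y) ≤ ∑ y ∈ B, |p y - q y| :=
      Finset.sum_le_sum fun y _ => by rw [abs_sub_comm]; exact le_abs_self _
    have h2 : -∑ y ∈ Bᶜ, (q y - p y) ≤ ∑ y ∈ Bᶜ, |p y - q y| := by
      rw [← Finset.sum_neg_distrib]
      exact Finset.sum_le_sum fun y _ => by rw [abs_sub_comm]; exact neg_le_abs _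
    have : ∑ y ∈ B, (q y - p y) = (∑ y ∈ B, q y) - ∑ y ∈ B, p y :=
      Finset.sum_sub_distrib _ _
    linarith
  have hTnn : 0 ≤ T := Finset.sum_nonneg fun y _ => abs_nonneg _
  have : T/2 ≤ Real.sqrt (Real.log 2 * klDiv2 p q / 2) := by
    rw [show T/2 = Real.sqrt ((T/2)^2) from (Real.sqrt_sq (by linarith)).symm]
    apply Real.sqrt_le_sqrt
    nlinarith
  linarith


lemma ent_mul {A B : Type} [Fintype A] [Fintype B] (a : A → ℝ) (b : A → B → ℝ)
    (ha : ∀ i, 0 < a i) (hb1 : ∀ i, ∑ j, b i j = 1) :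
    ent (fun p : A × B => a p.1 * b p.1 p.2)
      = ent a - ∑ i, ∑ j, a i * b i j * Real.logb 2 (b i j) := by
  unfold ent
  rw [Fintype.sum_prod_type]
  have key : ∀ i j, a i * b i j * Real.logb 2 (a i * b i j)
      = b i j * (a i * Real.logb 2 (a i)) + a i * b i j * Real.logb 2 (b i j) := by
    intro i j
    rcases eq_or_ne (b i j) 0 with h | h
    · simp [h]
    · rw [Real.logb_mul (ha i).ne' h]; ring
  simp_rw [key, Finset.sum_add_distrib, ← Finset.sum_mul, hb1, one_mul]
  ring

end EpsBisim


/-- (ε-bisimulation.) For a surjective deterministic aggregation `g` and `Q`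
the transition matrix of the best Markov approximation `Ỹ` of `Y`, setting
`ε = sqrt( ln 2 · C_L(X,g) / (2 · min_x μ_x) )`, for every `x ∈ X` and every `B ⊆ Y`:
`∑_{x' ∈ g⁻¹(B)} P_{x→x'} ≥ ∑_{y∈B} Q_{g(x)→y} − ε`.  (Hence the relation
`{(g x, x) : x ∈ X}` witnesses that `X` and `Ỹ` are ε-bisimilar.) -/
theorem eps_bisimulation_of_aggregation
    {X Y : Type} [Fintype X] [Fintype Y] [Nonempty X] [Nonempty Y]
    [DecidableEq X] [DecidableEq Y]
    (μ : X → ℝ) (P : X → X → ℝ) (g : X → Y) (hg : Function.Surjective g)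
    (hμ0 : ∀ x, 0 ≤ μ x) (hμ1 : ∑ x, μ x = 1)
    (hP0 : ∀ x x', 0 ≤ P x x') (hP1 : ∀ x, ∑ x', P x x' = 1)
    (hinv : ∀ x', ∑ x, μ x * P x x' = μ x')
    (hirr : IrreducibleAperiodic (Matrix.of fun a b => P a b))
    (hμpos : ∀ x, 0 < μ x)
    (Q : Y → Y → ℝ)
    (hQ : ∀ y y', Q y y' * nuDist μ (detW g) y = jointYY μ P (detW g) (y, y')) :
    ∀ (x : X) (B : Finset Y),
      (∑ y ∈ B, Q (g x) y) -
          Real.sqrt (Real.log 2 * CL μ P (detW g) /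
            (2 * Finset.univ.inf' Finset.univ_nonempty μ)) ≤
        ∑ x' ∈ Finset.univ.filter (fun x' => g x' ∈ B), P x x' := by
  intro x B
  classical
  set W := detW g with hWdef
  set ν := nuDist μ W with hνdef
  set R := Rmat P g with hRdef
  have hν : ∀ y, ν y = ∑ x, if g x = y then μ x else 0 := by
    intro y
    simp [hνdef, nuDist, hWdef, detW, mul_ite, mul_one, mul_zero]
  have hνpos : ∀ y, 0 < ν y := by
    intro y
    obtain ⟨x0, hx0⟩ := hg y
    rw [hν]
    refine Finset.sum_pos' (fun i _ => ?_) ⟨x0, Finset.mem_univ x0, ?_⟩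
    · split
      · exact (hμpos i).le
      · exact le_refl _
    · simp [hx0, hμpos x0]
  have hR0 : ∀ x y, 0 ≤ R x y := by
    intro x y
    refine Finset.sum_nonneg fun x' _ => ?_
    split
    · exact hP0 x x'
    · exact le_refl _
  have hRsum : ∀ x, ∑ y, R x y = 1 := by
    intro x
    rw [hRdef]
    unfold Rmat
    rw [Finset.sum_comm]
    simp [Finset.sum_ite_eq, hP1 x]
  have hJ12 : jointX1Y2 μ P W = fun p : X × Y => μ p.1 * R p.1 p.2 := by
    funext p
    simp [jointX1Y2, hWdef, detW, hRdef, Rmat, Finset.mul_sum, mul_ite, mul_one, mul_zero]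
  have hJYY : ∀ y y', jointYY μ P W (y, y')
      = ∑ x, if g x = y then μ x * R x y' else 0 := by
    intro y y'
    simp only [jointYY, hWdef, detW, hRdef, Rmat, Finset.mul_sum, mul_ite, mul_one, mul_zero,
      ite_mul, zero_mul, one_mul]
    refine Finset.sum_congr rfl fun x0 _ => ?_
    split
    · rfl
    · simp
  have hQν : ∀ y y', ν y * Q y y' = ∑ x, if g x = y then μ x * R x y' else 0 := by
    intro y y'
    rw [← hJYY, mul_comm]
    exact hQ y y'
  have hQ0 : ∀ y y', 0 ≤ Q y y' := by
    intro y y'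
    have h : 0 ≤ ν y * Q y y' := by
      rw [hQν]
      refine Finset.sum_nonneg fun x0 _ => ?_
      split
      · exact mul_nonneg (hμ0 x0) (hR0 x0 y')
      · exact le_refl _
    nlinarith [hνpos y, h]
  have hQsum : ∀ y, ∑ y', Q y y' = 1 := by
    intro y
    have h : ν y * (∑ y', Q y y') = ν y * 1 := by
      rw [mul_one, Finset.mul_sum]
      simp_rw [hQν]
      rw [Finset.sum_comm, hν y]
      refine Finset.sum_congr rfl fun x0 _ => ?_
      split
      · rw [← Finset.mul_sum, hRsum, mul_one]
      · simp
    exact mul_left_cancel₀ (hνpos y).ne' h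
  have habs : ∀ x y, Q (g x) y = 0 → R x y = 0 := by
    intro x y h
    have h2 := hQν (g x) y
    rw [h, mul_zero] at h2
    have h3 := (Finset.sum_eq_zero_iff_of_nonneg (fun i _ => by
      split
      · exact mul_nonneg (hμ0 i) (hR0 i y)
      · exact le_refl _)).mp h2.symm x (Finset.mem_univ x)
    simp only [if_pos rfl] at h3
    exact (mul_eq_zero.mp h3).resolve_left (hμpos x).ne'
  -- entropy identity
  have hentX : ent (jointX1Y2 μ P W)
      = ent μ - ∑ x, ∑ y, μ x * R x y * Real.logb 2 (R x y) := by
    rw [hJ12]; exact EpsBisim.ent_mul μ R hμpos hRsum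
  have hJYYfun : jointYY μ P W = fun p : Y × Y => ν p.1 * Q p.1 p.2 := by
    funext p
    rw [mul_comm]
    exact (hQ p.1 p.2).symm
  have hentY : ent (jointYY μ P W)
      = ent ν - ∑ y, ∑ y', ν y * Q y y' * Real.logb 2 (Q y y') := by
    rw [hJYYfun]; exact EpsBisim.ent_mul ν Q hνpos hQsum
  have hE3 : ∑ y, ∑ y', ν y * Q y y' * Real.logb 2 (Q y y')
      = ∑ x, ∑ y', μ x * R x y' * Real.logb 2 (Q (g x) y') := by
    have step : ∀ y y', ν y * Q y y' * Real.logb 2 (Q y y')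
        = ∑ x, if g x = y then μ x * R x y' * Real.logb 2 (Q y y') else 0 := by
      intro y y'
      rw [hQν, Finset.sum_mul]
      refine Finset.sum_congr rfl fun x0 _ => ?_
      rw [ite_mul, zero_mul]
    simp_rw [step]
    rw [Finset.sum_comm]
    refine Eq.trans (Finset.sum_congr rfl fun y' _ => Finset.sum_comm) ?_
    rw [Finset.sum_comm]
    refine Finset.sum_congr rfl fun x0 _ => Finset.sum_congr rfl fun y' _ => ?_
    simp [Finset.sum_ite_eq]
  have hkl : ∀ x0, klDiv2 (R x0) (Q (g x0))
      = ∑ y, (R x0 y * Real.logb 2 (R x0 y) - R x0 y * Real.logb 2 (Q (g x0) y)) := by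
    intro x0
    unfold klDiv2
    refine Finset.sum_congr rfl fun y _ => ?_
    rcases eq_or_ne (R x0 y) 0 with h | h
    · simp [h]
    · have hq : Q (g x0) y ≠ 0 := fun hq => h (habs x0 y hq)
      rw [Real.logb_div h hq]
      ring
  have hCL : CL μ P W = ∑ x0, μ x0 * klDiv2 (R x0) (Q (g x0)) := by
    have e : ∑ x0, μ x0 * klDiv2 (R x0) (Q (g x0))
        = (∑ x0, ∑ y, μ x0 * R x0 y * Real.logb 2 (R x0 y))
          - ∑ x0, ∑ y, μ x0 * R x0 y * Real.logb 2 (Q (g x0) y) := by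
      rw [← Finset.sum_sub_distrib]
      refine Finset.sum_congr rfl fun x0 _ => ?_
      rw [hkl x0, Finset.mul_sum, ← Finset.sum_sub_distrib]
      exact Finset.sum_congr rfl fun y _ => by ring
    unfold CL HY2gY1 HY2gX1
    rw [hentX, hentY, hE3]
    linarith [e]
  have hfilter : ∑ x' ∈ Finset.univ.filter (fun x' => g x' ∈ B), P x x' = ∑ y ∈ B, R x y := by
    rw [Finset.sum_filter, hRdef]
    unfold Rmat
    symm
    rw [Finset.sum_comm]
    exact Finset.sum_congr rfl fun x' _ => by simp [Finset.sum_ite_eq]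
  have main := EpsBisim.pinsker_sum (R x) (Q (g x)) (hR0 x) (hQ0 (g x)) (hRsum x)
    (hQsum (g x)) (habs x) B
  set m := Finset.univ.inf' Finset.univ_nonempty μ with hm
  have hmpos : 0 < m := (Finset.lt_inf'_iff _).mpr fun i _ => hμpos i
  have hmle : m ≤ μ x := Finset.inf'_le _ (Finset.mem_univ x)
  have hklnn : ∀ x0, 0 ≤ klDiv2 (R x0) (Q (g x0)) := fun x0 =>
    EpsBisim.klDiv2_nonneg _ _ (hR0 x0) (hQ0 (g x0)) (hRsum x0) (hQsum (g x0)) (habs x0)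
  have hxle : μ x * klDiv2 (R x) (Q (g x)) ≤ CL μ P W := by
    rw [hCL]
    exact Finset.single_le_sum (fun i _ => mul_nonneg (hμ0 i) (hklnn i)) (Finset.mem_univ x)
  have harg : Real.log 2 * klDiv2 (R x) (Q (g x)) / 2 ≤ Real.log 2 * CL μ P W / (2 * m) := by
    have hlog : 0 < Real.log 2 := Real.log_pos one_lt_two
    rw [div_le_div_iff₀ (by norm_num) (by positivity)]
    have h1 : m * klDiv2 (R x) (Q (g x)) ≤ CL μ P W := by nlinarith [hklnn x]
    nlinarith
  have hsq := Real.sqrt_le_sqrt harg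
  rw [hfilter]
  linarith [main, hsq]
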